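/- Let S be a numerical semigroup and let I, I' be proper maximum sparse ideals of S. If I ⊆ I', then #(S \ I) ≥ #(S \ I') and the difference #(S \ I) - #(S \ I') belongs to S. -/
import Mathlib


/-- `S` is a numerical semigroup: it contains `0`, is closed under addition,
and has finite complement in `ℕ`. -/
def IsNumericalSemigroup (S : Set ℕ) : Prop :=
  0 ∈ S ∧ (∀ a ∈ S, ∀ b ∈ S, a + b ∈ S) ∧ Sᶜ.Finite

/-- The genus of `S`: the number of gaps, i.e. of elements of `ℕ \ S`. -/
noncomputable def genus (S : Set ℕ) : ℕ := Sᶜ.ncard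

/-- The numConductor of `S`: the smallest integer `c` such that every integer `≥ c`
belongs to `S`. -/
noncomputable def numConductor (S : Set ℕ) : ℕ := sInf {c : ℕ | ∀ m, c ≤ m → m ∈ S}

/-- `I` is an ideal of `S`: a nonempty subset of `S` with `I + S ⊆ I`. -/
def IsIdeal (S I : Set ℕ) : Prop :=
  I.Nonempty ∧ I ⊆ S ∧ ∀ i ∈ I, ∀ s ∈ S, i + s ∈ I

/-- The Frobenius number of an ideal `I`: the largest integer not belonging to `I`. -/
noncomputable def frobeniusNumber (I : Set ℕ) : ℕ := sSup Iᶜ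

/-- `I` is a maximum sparse ideal of `S`: its Frobenius number equals
`2g - 1 + #(S \ I)` where `g` is the genus of `S`. -/
def IsMaxSparse (S I : Set ℕ) : Prop :=
  (frobeniusNumber I : ℤ) = 2 * (genus S : ℤ) - 1 + ((S \ I).ncard : ℤ)

/-- The leader of a proper ideal `I` of `S`: the largest element of `S \ I`. -/
noncomputable def leader (S I : Set ℕ) : ℕ := sSup (S \ I)

/-- The complement of an ideal of a numerical semigroup is finite. -/
lemma ideal_compl_finite (S I : Set ℕ) (hS : IsNumericalSemigroup S)
    (hI : IsIdeal S I) : Iᶜ.Finite := by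
  obtain ⟨h0, hadd, hSc⟩ := hS
  obtain ⟨⟨i₀, hi₀⟩, hIS, hid⟩ := hI
  have hsub : Iᶜ ⊆ Set.Iio i₀ ∪ (fun m => i₀ + m) '' Sᶜ := by
    intro n hn
    by_cases h : n < i₀
    · exact Or.inl h
    · right
      refine ⟨n - i₀, fun hs => ?_, show i₀ + (n - i₀) = n by omega⟩
      have := hid i₀ hi₀ (n - i₀) hs
      rw [Nat.add_sub_cancel' (by omega)] at this
      exact hn this
  exact ((Set.finite_Iio i₀).union (hSc.image _)).subset hsub

/-- The complement of a proper ideal is nonempty. -/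
lemma ideal_compl_nonempty (S I : Set ℕ) (hI : IsIdeal S I) (hproper : I ≠ S) :
    Iᶜ.Nonempty := by
  obtain ⟨_, hIS, _⟩ := hI
  rcases Set.exists_of_ssubset (hIS.ssubset_of_ne hproper) with ⟨x, _, hx⟩
  exact ⟨x, hx⟩

lemma sdiff_card (S I : Set ℕ) (hS : IsNumericalSemigroup S) (hI : IsIdeal S I) :
    Iᶜ.ncard = genus S + (S \ I).ncard := by
  have hIc := ideal_compl_finite S I hS hI
  have heq : Iᶜ = Sᶜ ∪ (S \ I) := by
    ext x
    by_cases hx : x ∈ S <;> simp [hx]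
    exact fun h => hx (hI.2.1 h)
  rw [heq, Set.ncard_union_eq (by
      rw [Set.disjoint_left]; rintro x hx ⟨hxS, _⟩; exact hx hxS)
    (hS.2.2) (hIc.subset (by rw [heq]; exact Set.subset_union_right))]
  rfl

/-- Key property of maximum sparse ideals: if `x ≤ F(I)` is not in `I`,
then `F(I) - x ∈ S`. -/
lemma maxSparse_key (S I : Set ℕ) (hS : IsNumericalSemigroup S)
    (hI : IsIdeal S I) (hproper : I ≠ S) (hms : IsMaxSparse S I) :
    ∀ x, x ≤ frobeniusNumber I → x ∉ I → frobeniusNumber I - x ∈ S := by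
  have hIc := ideal_compl_finite S I hS hI
  obtain ⟨h0, hadd, hSc⟩ := hS
  obtain ⟨hne, hIS, hid⟩ := hI
  set F := frobeniusNumber I with hF
  have hFmem : F ∉ I :=
    Nat.sSup_mem (ideal_compl_nonempty S I ⟨hne, hIS, hid⟩ hproper) hIc.bddAbove
  have hle : ∀ x, x ∉ I → x ≤ F := fun x hx => le_csSup hIc.bddAbove hx
  set A := Iᶜ with hA
  set B := {x : ℕ | x ≤ F ∧ F - x ∉ S} with hB
  have hBfin : B.Finite := (Set.finite_Iic F).subset (fun x hx => hx.1)
  have hunion : A ∪ B = Set.Iic F := by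
    ext x
    constructor
    · rintro (h | h)
      · exact hle x h
      · exact h.1
    · intro hx
      by_cases hxI : x ∈ I
      · right
        refine ⟨hx, fun hs => ?_⟩
        have := hid x hxI (F - x) hs
        rw [Nat.add_sub_cancel' hx] at this
        exact hFmem this
      · exact Or.inl hxI
  have hAcard : A.ncard = genus S + (S \ I).ncard :=
    sdiff_card S I ⟨h0, hadd, hSc⟩ ⟨hne, hIS, hid⟩
  have hBcard : B.ncard ≤ genus S := by
    have hinj : Set.InjOn (fun x => F - x) B := by
      intro x hx y hy hxy
      simp only at hxy
      have := hx.1; have := hy.1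
      omega
    have himg : (fun x => F - x) '' B ⊆ Sᶜ := by
      rintro _ ⟨x, hx, rfl⟩
      exact hx.2
    have := Set.ncard_le_ncard himg hSc
    rwa [Set.ncard_image_of_injOn hinj] at this
  have hUcard : (A ∪ B).ncard = F + 1 := by
    rw [hunion]
    rw [show Set.Iic F = ↑(Finset.Iic F) by simp, Set.ncard_coe_finset]
    simp
  have htot := Set.ncard_union_add_ncard_inter A B hIc hBfin
  have hFeq : F + 1 = 2 * genus S + (S \ I).ncard := by
    have := hms
    rw [IsMaxSparse, ← hF] at this
    omega
  have hinter : (A ∩ B).ncard = 0 := by omega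
  have hempty : A ∩ B = ∅ :=
    (Set.ncard_eq_zero (hIc.subset Set.inter_subset_left)).mp hinter
  intro x hxF hxI
  by_contra hc
  have : x ∈ A ∩ B := ⟨hxI, hxF, hc⟩
  rw [hempty] at this
  exact this

/-- If `I ⊆ I'` are proper maximum sparse ideals, then
`#(S \ I') ≤ #(S \ I)` and `#(S \ I) - #(S \ I') ∈ S`. -/
theorem card_diff_sub_card_diff_mem (S I I' : Set ℕ)
    (hS : IsNumericalSemigroup S)
    (hI : IsIdeal S I) (hproperI : I ≠ S) (hmsI : IsMaxSparse S I)
    (hI' : IsIdeal S I') (hproperI' : I' ≠ S) (hmsI' : IsMaxSparse S I')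
    (hsub : I ⊆ I') :
    (S \ I').ncard ≤ (S \ I).ncard ∧ (S \ I).ncard - (S \ I').ncard ∈ S := by
  have hIc := ideal_compl_finite S I hS hI
  have hI'c := ideal_compl_finite S I' hS hI'
  set F := frobeniusNumber I with hF
  set F' := frobeniusNumber I' with hF'
  have hF'mem : F' ∉ I' :=
    Nat.sSup_mem (ideal_compl_nonempty S I' hI' hproperI') hI'c.bddAbove
  have hF'I : F' ∉ I := fun h => hF'mem (hsub h)
  have hle : F' ≤ F := le_csSup hIc.bddAbove hF'I
  have hcard : (S \ I').ncard ≤ (S \ I).ncard :=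
    Set.ncard_le_ncard (fun x hx => ⟨hx.1, fun h => hx.2 (hsub h)⟩)
      (hIc.subset (fun x hx => hx.2))
  refine ⟨hcard, ?_⟩
  have hkey := maxSparse_key S I hS hI hproperI hmsI F' hle hF'I
  have h1 := hmsI
  have h2 := hmsI'
  rw [IsMaxSparse] at h1 h2
  rw [← hF] at h1
  rw [← hF'] at h2
  have : (S \ I).ncard - (S \ I').ncard = F - F' := by omega
  rwa [this]
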